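/- arXiv:math/0101056 — 4 statements merged into one kernel-verified Lean document; each statement's English description precedes it below -/
import Mathlib

section
/- Let n ≥ 1, let U, V, W be open subsets of ℝⁿ, let g : U → V and f : V → W be C² maps, and let x ∈ U be such that Dg(x) and Df(g(x)) are invertible. For a C² map h with invertible derivative define L(h)(y)(u,v) = Dh(y)⁻¹( D²h(y)(u,v) ), τ_h(y)(u) = tr( w ↦ L(h)(y)(u,w) ), and the projective symbol 𝔗(h)(y)(u,v) = L(h)(y)(u,v) − (1/(n+1))·( τ_h(y)(u)·v + τ_h(y)(v)·u ). Then for all u, v ∈ ℝⁿ: 𝔗(f∘g)(x)(u,v) = Dg(x)⁻¹( 𝔗(f)(g(x))( Dg(x)u, Dg(x)v ) ) + 𝔗(g)(x)(u,v); that is, the trace-adjusted (projective) Hessian cocycle satisfies the same 1-cocycle identity. -/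
open ContinuousLinearMap

/-- `L(h)(y)(u,·) = Dh(y)⁻¹ ∘ D²h(y)(u,·)` as a continuous linear map, the flat-coordinate
expression of the tensor `𝔏(h) = h*Γ − Γ` with the first argument `u` inserted. -/
noncomputable def hessianCocycleCLM (n : ℕ) (h : (Fin n → ℝ) → (Fin n → ℝ))
    (y u : Fin n → ℝ) : (Fin n → ℝ) →L[ℝ] (Fin n → ℝ) :=
  (fderiv ℝ h y).inverse.comp (fderiv ℝ (fderiv ℝ h) y u)

/-- The trace `τ_h(y)(u) = tr(w ↦ L(h)(y)(u,w))`. -/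
noncomputable def hessianTrace (n : ℕ) (h : (Fin n → ℝ) → (Fin n → ℝ))
    (y u : Fin n → ℝ) : ℝ :=
  LinearMap.trace ℝ (Fin n → ℝ) (hessianCocycleCLM n h y u).toLinearMap

/-- The projective symbol
`𝔗(h)(y)(u,v) = L(h)(y)(u,v) − (1/(n+1))(τ_h(y)(u)·v + τ_h(y)(v)·u)`. -/
noncomputable def projSymbol (n : ℕ) (h : (Fin n → ℝ) → (Fin n → ℝ))
    (y u v : Fin n → ℝ) : Fin n → ℝ :=
  hessianCocycleCLM n h y u v
    - (1 / ((n : ℝ) + 1)) •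
        (hessianTrace n h y u • v + hessianTrace n h y v • u)

/-- Second-derivative chain rule at a point. -/
lemma second_fderiv_comp_aux (n : ℕ) (U V : Set (Fin n → ℝ))
    (hU : IsOpen U) (hV : IsOpen V)
    (g f : (Fin n → ℝ) → (Fin n → ℝ))
    (hgUV : Set.MapsTo g U V)
    (hg : ContDiffOn ℝ 2 g U) (hf : ContDiffOn ℝ 2 f V)
    (x : Fin n → ℝ) (hx : x ∈ U) (u : Fin n → ℝ) :
    fderiv ℝ (fderiv ℝ (f ∘ g)) x u
      = ((fderiv ℝ (fderiv ℝ f) (g x)) (fderiv ℝ g x u)).comp (fderiv ℝ g x)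
        + (fderiv ℝ f (g x)).comp (fderiv ℝ (fderiv ℝ g) x u) := by
  have hgx : ContDiffAt ℝ 2 g x := hg.contDiffAt (hU.mem_nhds hx)
  have hfx : ContDiffAt ℝ 2 f (g x) := hf.contDiffAt (hV.mem_nhds (hgUV hx))
  have heq : fderiv ℝ (f ∘ g) =ᶠ[nhds x] fun y => (fderiv ℝ f (g y)).comp (fderiv ℝ g y) := by
    filter_upwards [hU.mem_nhds hx] with y hy
    exact fderiv_comp y
      ((hf.contDiffAt (hV.mem_nhds (hgUV hy))).differentiableAt two_ne_zero)
      ((hg.contDiffAt (hU.mem_nhds hy)).differentiableAt two_ne_zero)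
  rw [heq.fderiv_eq]
  have hc : DifferentiableAt ℝ (fun y => fderiv ℝ f (g y)) x :=
    ((hfx.fderiv_right (le_refl 2)).differentiableAt one_ne_zero).comp x
      (hgx.differentiableAt two_ne_zero)
  have hd : DifferentiableAt ℝ (fun y => fderiv ℝ g y) x :=
    (hgx.fderiv_right (le_refl 2)).differentiableAt one_ne_zero
  have hfc : fderiv ℝ (fun y => fderiv ℝ f (g y)) x
      = (fderiv ℝ (fderiv ℝ f) (g x)).comp (fderiv ℝ g x) :=
    fderiv_comp x ((hfx.fderiv_right (le_refl 2)).differentiableAt one_ne_zero)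
      (hgx.differentiableAt two_ne_zero)
  rw [fderiv_clm_comp hc hd, hfc]
  ext v i
  simp
  ring

/-- The trace-adjusted (projective) Hessian cocycle satisfies the 1-cocycle identity
`𝔗(f∘g)(x)(u,v) = Dg(x)⁻¹( 𝔗(f)(g(x))(Dg(x)u, Dg(x)v) ) + 𝔗(g)(x)(u,v)`. -/
theorem projSymbol_comp (n : ℕ) (hn : 1 ≤ n) (U V W : Set (Fin n → ℝ))
    (hU : IsOpen U) (hV : IsOpen V) (hW : IsOpen W)
    (g f : (Fin n → ℝ) → (Fin n → ℝ))
    (hgUV : Set.MapsTo g U V) (hfVW : Set.MapsTo f V W)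
    (hg : ContDiffOn ℝ 2 g U) (hf : ContDiffOn ℝ 2 f V)
    (x : Fin n → ℝ) (hx : x ∈ U)
    (hDg : (fderiv ℝ g x).IsInvertible) (hDf : (fderiv ℝ f (g x)).IsInvertible) :
    ∀ u v : Fin n → ℝ,
      projSymbol n (f ∘ g) x u v
        = (fderiv ℝ g x).inverse
            (projSymbol n f (g x) (fderiv ℝ g x u) (fderiv ℝ g x v))
          + projSymbol n g x u v := by
  intro u v
  set Dg := fderiv ℝ g x with hDgdef
  set Df := fderiv ℝ f (g x) with hDfdef
  have hgx : ContDiffAt ℝ 2 g x := hg.contDiffAt (hU.mem_nhds hx)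
  have hfx : ContDiffAt ℝ 2 f (g x) := hf.contDiffAt (hV.mem_nhds (hgUV hx))
  have hcomp : fderiv ℝ (f ∘ g) x = Df.comp Dg :=
    fderiv_comp x (hfx.differentiableAt two_ne_zero) (hgx.differentiableAt two_ne_zero)
  -- inverse of Df ∘ Dg
  have hinvcomp : (fderiv ℝ (f ∘ g) x).inverse = Dg.inverse.comp Df.inverse := by
    rw [hcomp]; exact hDg.inverse_comp_of_right
  -- Df.inverse ∘ Df = id, Dg ∘ Dg.inverse = id, Dg.inverse (Dg w) = w
  obtain ⟨ef, hef⟩ := hDf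
  obtain ⟨eg, heg⟩ := hDg
  have hDfinv : Df.inverse.comp Df = ContinuousLinearMap.id ℝ (Fin n → ℝ) := by
    rw [← hef, inverse_equiv]; ext w; simp
  have hDginvDg : ∀ w, Dg.inverse (Dg w) = w := by
    intro w; rw [← heg, inverse_equiv]; simp
  have hDgDginv : Dg.comp Dg.inverse = ContinuousLinearMap.id ℝ (Fin n → ℝ) := by
    rw [← heg, inverse_equiv]; ext w; simp
  -- cocycle identity for L as CLMs
  have hL : ∀ w : Fin n → ℝ, hessianCocycleCLM n (f ∘ g) x w
      = Dg.inverse.comp ((hessianCocycleCLM n f (g x) (Dg w)).comp Dg)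
        + hessianCocycleCLM n g x w := by
    intro w
    have h2 := second_fderiv_comp_aux n U V hU hV g f hgUV hg hf x hx w
    unfold hessianCocycleCLM
    rw [hinvcomp, h2]
    rw [← hDgdef, ← hDfdef]
    ext z i
    have : Df.inverse (Df ((fderiv ℝ (fderiv ℝ g) x w) z))
        = (fderiv ℝ (fderiv ℝ g) x w) z := by
      have := congrArg (fun (T : (Fin n → ℝ) →L[ℝ] (Fin n → ℝ)) =>
        T ((fderiv ℝ (fderiv ℝ g) x w) z)) hDfinv
      simpa using this
    simp [this]
  -- trace identity
  have htr : ∀ w : Fin n → ℝ, hessianTrace n (f ∘ g) x w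
      = hessianTrace n f (g x) (Dg w) + hessianTrace n g x w := by
    intro w
    unfold hessianTrace
    rw [hL w]
    rw [ContinuousLinearMap.coe_add, map_add]
    congr 1
    have hcoe : (Dg.inverse.comp ((hessianCocycleCLM n f (g x) (Dg w)).comp Dg)).toLinearMap
        = Dg.inverse.toLinearMap ∘ₗ ((hessianCocycleCLM n f (g x) (Dg w)).toLinearMap ∘ₗ
            Dg.toLinearMap) := rfl
    rw [hcoe]
    rw [show Dg.inverse.toLinearMap ∘ₗ ((hessianCocycleCLM n f (g x) (Dg w)).toLinearMap ∘ₗ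
            Dg.toLinearMap)
        = Dg.inverse.toLinearMap * ((hessianCocycleCLM n f (g x) (Dg w)).toLinearMap *
            Dg.toLinearMap) from rfl,
      LinearMap.trace_mul_comm]
    have : Dg.toLinearMap * Dg.inverse.toLinearMap = LinearMap.id := by
      have := congrArg ContinuousLinearMap.toLinearMap hDgDginv
      exact this
    rw [mul_assoc, this]
    rw [Module.End.mul_eq_comp, LinearMap.comp_id]
  -- assemble
  have hLv := congrArg (fun T : (Fin n → ℝ) →L[ℝ] (Fin n → ℝ) => T v) (hL u)
  unfold projSymbol
  rw [hLv, htr u, htr v]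
  rw [map_sub, map_smul, map_add, map_smul, map_smul, hDginvDg u, hDginvDg v]
  simp only [ContinuousLinearMap.add_apply, ContinuousLinearMap.coe_comp',
    Function.comp_apply]
  module
end

section
/- Let n ≥ 1, let A be a real n × n matrix, b, c ∈ ℝⁿ, d ∈ ℝ, and let f(x) = (⟨c,x⟩ + d)⁻¹ · (A x + b). Let x satisfy ⟨c,x⟩ + d ≠ 0 and suppose Df(x) is invertible. Put L(f)(x)(u,v) = Df(x)⁻¹( D²f(x)(u,v) ) and τ(u) = tr( w ↦ L(f)(x)(u,w) ). Then the projective symbol vanishes: L(f)(x)(u,v) − (1/(n+1))·( τ(u)·v + τ(v)·u ) = 0 for all u, v ∈ ℝⁿ. In other words, the projective Schwarzian cocycle 𝔗 vanishes on the projective group PSL(n+1,ℝ). -/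
open ContinuousLinearMap

lemma trace_clm_eq_sum' {n : ℕ} (T : (Fin n → ℝ) →L[ℝ] (Fin n → ℝ)) :
    LinearMap.trace ℝ (Fin n → ℝ) T.toLinearMap
      = ∑ i, T (Pi.basisFun ℝ (Fin n) i) i := by
  classical
  rw [LinearMap.trace_eq_matrix_trace ℝ (Pi.basisFun ℝ (Fin n))]
  simp [Matrix.trace, Matrix.diag, LinearMap.toMatrix_apply]

lemma final_aux {E : Type*} [AddCommGroup E] [Module ℝ E]
    (s a p m : ℝ) (hs : s ≠ 0) (hm : m ≠ 0) (u v : E) :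
    (-s⁻¹) • (a • v + p • u)
      - (1 / m) • ((-s⁻¹ * (m * a)) • v + (-s⁻¹ * (m * p)) • u) = 0 := by
  match_scalars <;> (field_simp; try ring)

lemma hkey_aux {E : Type*} [NormedAddCommGroup E] [NormedSpace ℝ E]
    (s : ℝ) (hs : s ≠ 0) (σ : E →L[ℝ] ℝ) (Mc : E →L[ℝ] E) (g : E) (u v : E) :
    ((((-(s⁻¹ * s⁻¹)) • σ).smulRight Mc) +
      ((-(s⁻¹ * s⁻¹)) • ((smulRightL ℝ E E σ).comp Mc)
        + (-(s⁻¹ • ((-(s⁻¹ * s⁻¹)) • σ) + s⁻¹ • ((-(s⁻¹ * s⁻¹)) • σ))).smulRight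
            (smulRightL ℝ E E σ g))) u v
    = (s⁻¹ • Mc + (-(s⁻¹ * s⁻¹)) • smulRightL ℝ E E σ g)
        ((-s⁻¹) • (σ u • v + σ v • u)) := by
  have hsRL : ∀ z : E, smulRightL ℝ E E σ z = σ.smulRight z := fun _ => rfl
  simp only [add_apply, coe_smul', Pi.smul_apply, smulRight_apply, comp_apply,
    neg_apply, hsRL, map_smul, map_add, map_neg, smul_add, smul_smul, neg_smul,
    smul_neg, neg_neg, Pi.add_apply]
  match_scalars <;> field_simp <;> ring_nf <;> field_simp

/-- The projective Schwarzian cocycle `𝔗` vanishes on the projective group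
`PSL(n+1,ℝ)`: for a fractional linear map `f(x) = (Ax+b)/(⟨c,x⟩+d)` with invertible
differential, the projective symbol
`L(f)(x)(u,v) − (1/(n+1))(τ(u)·v + τ(v)·u)` vanishes, where
`L(f)(x)(u,v) = Df(x)⁻¹(D²f(x)(u,v))` and `τ(u) = tr(w ↦ L(f)(x)(u,w))`. -/
theorem projSymbol_vanishes_on_fractionalLinear (n : ℕ) (hn : 1 ≤ n)
    (A : Matrix (Fin n) (Fin n) ℝ) (b c : Fin n → ℝ) (d : ℝ)
    (f : (Fin n → ℝ) → (Fin n → ℝ))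
    (hf : ∀ x, f x = (∑ i, c i * x i + d)⁻¹ • (A.mulVec x + b))
    (x : Fin n → ℝ) (hx : ∑ i, c i * x i + d ≠ 0)
    (hDf : (fderiv ℝ f x).IsInvertible)
    (L : (Fin n → ℝ) → (Fin n → ℝ) →L[ℝ] (Fin n → ℝ))
    (hL : ∀ u, L u = (fderiv ℝ f x).inverse.comp (fderiv ℝ (fderiv ℝ f) x u))
    (τ : (Fin n → ℝ) → ℝ)
    (hτ : ∀ u, τ u = LinearMap.trace ℝ (Fin n → ℝ) (L u).toLinearMap) :
    ∀ u v : Fin n → ℝ,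
      L u v - (1 / ((n : ℝ) + 1)) • (τ u • v + τ v • u) = 0 := by
  classical
  set σ : (Fin n → ℝ) →L[ℝ] ℝ := ∑ i, c i • ContinuousLinearMap.proj i with hσdef
  have hσ : ∀ y, σ y = ∑ i, c i * y i := by
    intro y; simp [hσdef]
  set Mc : (Fin n → ℝ) →L[ℝ] (Fin n → ℝ) := LinearMap.toContinuousLinearMap A.mulVecLin
    with hMcdef
  have hMc : ∀ y, Mc y = A.mulVec y := fun y => rfl
  set F : (Fin n → ℝ) → ((Fin n → ℝ) →L[ℝ] (Fin n → ℝ)) := fun y =>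
    (σ y + d)⁻¹ • Mc +
      (-((σ y + d)⁻¹ * (σ y + d)⁻¹)) •
        (smulRightL ℝ (Fin n → ℝ) (Fin n → ℝ)) σ (Mc y + b) with hFdef
  have hsRL : ∀ (z : Fin n → ℝ),
      (smulRightL ℝ (Fin n → ℝ) (Fin n → ℝ)) σ z = σ.smulRight z := fun _ => rfl
  have hσy : ∀ y : Fin n → ℝ, HasFDerivAt (fun z => σ z + d) σ y := fun y =>
    σ.hasFDerivAt.add_const d
  have hinv : ∀ y : Fin n → ℝ, σ y + d ≠ 0 →
      HasFDerivAt (fun z => (σ z + d)⁻¹) ((-((σ y + d)⁻¹ * (σ y + d)⁻¹)) • σ) y := by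
    intro y hy
    have h := (hasFDerivAt_inv (𝕜 := ℝ) hy).comp y (hσy y)
    refine h.congr_fderiv ?_
    ext w
    simp [pow_two, mul_inv, mul_comm]
  have hFd : ∀ y, σ y + d ≠ 0 → HasFDerivAt f (F y) y := by
    intro y hy
    have h2 : HasFDerivAt (fun z => Mc z + b) Mc y := Mc.hasFDerivAt.add_const b
    have h4 := (hinv y hy).smul h2
    have hfun : (fun z => (σ z + d)⁻¹ • (Mc z + b)) = f := by
      funext z
      rw [hf z]
      simp [hσ, hMc]
    rw [show ((fun z => (σ z + d)⁻¹) • fun z => Mc z + b) = f from hfun] at h4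
    refine h4.congr_fderiv ?_
    ext w
    simp [hFdef, hsRL, smul_smul]
    ring
  have hsx : σ x + d ≠ 0 := by rw [hσ]; exact hx
  have hev : ∀ᶠ y in nhds x, fderiv ℝ f y = F y := by
    have hne : ∀ᶠ y in nhds x, σ y + d ≠ 0 :=
      ((σ.continuous.add continuous_const).continuousAt).eventually_ne hsx
    filter_upwards [hne] with y hy using (hFd y hy).fderiv
  have h2eq : fderiv ℝ (fderiv ℝ f) x = fderiv ℝ F x :=
    Filter.EventuallyEq.fderiv_eq hev
  set D₁ : (Fin n → ℝ) →L[ℝ] ℝ := (-((σ x + d)⁻¹ * (σ x + d)⁻¹)) • σ with hD₁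
  have hA1 : HasFDerivAt (fun y => (σ y + d)⁻¹ • Mc) (D₁.smulRight Mc) x :=
    (hinv x hsx).smul_const Mc
  have h2 : HasFDerivAt (fun z => Mc z + b) Mc x := Mc.hasFDerivAt.add_const b
  have hk : HasFDerivAt (fun y => (smulRightL ℝ (Fin n → ℝ) (Fin n → ℝ)) σ (Mc y + b))
      (((smulRightL ℝ (Fin n → ℝ) (Fin n → ℝ)) σ).comp Mc) x :=
    ((smulRightL ℝ (Fin n → ℝ) (Fin n → ℝ)) σ).hasFDerivAt.comp x h2
  have hq : HasFDerivAt (fun y => -((σ y + d)⁻¹ * (σ y + d)⁻¹))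
      (-((σ x + d)⁻¹ • D₁ + (σ x + d)⁻¹ • D₁)) x := ((hinv x hsx).mul (hinv x hsx)).neg
  have hB := hq.smul hk
  have hG : HasFDerivAt F ((D₁.smulRight Mc) +
      ((-((σ x + d)⁻¹ * (σ x + d)⁻¹)) • (((smulRightL ℝ (Fin n → ℝ) (Fin n → ℝ)) σ).comp Mc)
        + (-((σ x + d)⁻¹ • D₁ + (σ x + d)⁻¹ • D₁)).smulRight
            ((smulRightL ℝ (Fin n → ℝ) (Fin n → ℝ)) σ (Mc x + b)))) x := hA1.add hB
  have hkey : ∀ u v : Fin n → ℝ,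
      fderiv ℝ (fderiv ℝ f) x u v =
        F x ((-(σ x + d)⁻¹) • (σ u • v + σ v • u)) := by
    intro u v
    rw [h2eq, hG.fderiv]
    simp only [hFdef, hD₁]
    exact hkey_aux (σ x + d) hsx σ Mc (Mc x + b) u v
  have hLuv : ∀ u v : Fin n → ℝ,
      L u v = (-(σ x + d)⁻¹) • (σ u • v + σ v • u) := by
    intro u v
    rw [hL u]
    simp only [comp_apply]
    rw [hkey u v]
    have h1 : fderiv ℝ f x = F x := (hFd x hsx).fderiv
    rw [← h1]
    exact hDf.inverse_apply_eq.mpr rfl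
  have hτeq : ∀ u, τ u = (-(σ x + d)⁻¹) * (((n : ℝ) + 1) * σ u) := by
    intro u
    rw [hτ u, trace_clm_eq_sum']
    have hterm : ∀ i, L u (Pi.basisFun ℝ (Fin n) i) i
        = (-(σ x + d)⁻¹) * (σ u + c i * u i) := by
      intro i
      rw [hLuv]
      have hσe : σ (Pi.basisFun ℝ (Fin n) i) = c i := by
        rw [hσ]
        simp [Pi.basisFun_apply, Pi.single_apply, mul_ite]
      have he : (Pi.basisFun ℝ (Fin n)) i i = 1 := by
        simp [Pi.basisFun_apply]
      simp only [Pi.smul_apply, Pi.add_apply, smul_eq_mul, hσe, he]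
      ring
    rw [Finset.sum_congr rfl fun i _ => hterm i, ← Finset.mul_sum,
      Finset.sum_add_distrib, Finset.sum_const, Finset.card_univ, Fintype.card_fin,
      nsmul_eq_mul, ← hσ u]
    ring
  intro u v
  rw [hLuv, hτeq u, hτeq v]
  have hn1 : ((n : ℝ) + 1) ≠ 0 := by positivity
  exact final_aux (σ x + d) (σ u) (σ v) ((n : ℝ) + 1) hsx hn1 u v
end

section
/- Let n ≥ 1 and let f : ℝⁿ \ {0} → ℝⁿ be the inversion f(x) = x/‖x‖² with respect to the Euclidean norm. Then for every x ≠ 0 and all u, v ∈ ℝⁿ: D²f(x)(u,v) = Df(x)( ω(u)·v + ω(v)·u − ⟨u,v⟩·ω♯ ), where ω(w) = −2⟨x,w⟩/‖x‖² and ω♯ = −2x/‖x‖². That is, the tensor 𝔏(f) = f*Γ − Γ of the inversion has the conformal pure-trace form δ^k_i ω_j + δ^k_j ω_i − g_{ij} g^{kt} ω_t, so the conformally invariant Schwarzian cocycle vanishes on inversions. -/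
open scoped RealInnerProductSpace

section Aux

variable {n : ℕ}

/-- `innerSL` with instance paths fixed to the canonical ones. -/
noncomputable def innerE (n : ℕ) :
    EuclideanSpace ℝ (Fin n) →L[ℝ] EuclideanSpace ℝ (Fin n) →L[ℝ] ℝ := innerSL ℝ

@[simp] lemma innerE_apply (u v : EuclideanSpace ℝ (Fin n)) :
    innerE n u v = ⟪u, v⟫ := rfl

/-- `smulRightL` with instance paths fixed to the canonical ones. -/
noncomputable def sR (n : ℕ) :
    (EuclideanSpace ℝ (Fin n) →L[ℝ] ℝ) →L[ℝ] EuclideanSpace ℝ (Fin n) →L[ℝ]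
      (EuclideanSpace ℝ (Fin n) →L[ℝ] EuclideanSpace ℝ (Fin n)) :=
  ContinuousLinearMap.smulRightL ℝ _ _

@[simp] lemma sR_apply (c : EuclideanSpace ℝ (Fin n) →L[ℝ] ℝ)
    (w u : EuclideanSpace ℝ (Fin n)) :
    sR n c w u = c u • w := rfl

/-- Explicit first derivative of the inversion. -/
noncomputable def Dinv (n : ℕ) (y : EuclideanSpace ℝ (Fin n)) :
    EuclideanSpace ℝ (Fin n) →L[ℝ] EuclideanSpace ℝ (Fin n) :=
  ((⟪y, y⟫ : ℝ))⁻¹ • ContinuousLinearMap.id ℝ (EuclideanSpace ℝ (Fin n)) +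
    (-(2 * (((⟪y, y⟫ : ℝ))⁻¹ * ((⟪y, y⟫ : ℝ))⁻¹))) •
      (sR n (innerE n y) y)

lemma hasFDerivAt_q (y : EuclideanSpace ℝ (Fin n)) :
    HasFDerivAt (fun z : EuclideanSpace ℝ (Fin n) => (⟪z, z⟫ : ℝ))
      ((fderivInnerCLM ℝ (y, y)).comp
        ((ContinuousLinearMap.id ℝ (EuclideanSpace ℝ (Fin n))).prod
          (ContinuousLinearMap.id ℝ (EuclideanSpace ℝ (Fin n))))) y :=
  (hasFDerivAt_id y).inner ℝ (hasFDerivAt_id y)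

lemma hasFDerivAt_c (y : EuclideanSpace ℝ (Fin n)) (hy : y ≠ 0) :
    HasFDerivAt (fun z : EuclideanSpace ℝ (Fin n) => ((⟪z, z⟫ : ℝ))⁻¹)
      ((-(((⟪y, y⟫ : ℝ)) ^ 2)⁻¹) •
        ((fderivInnerCLM ℝ (y, y)).comp
          ((ContinuousLinearMap.id ℝ (EuclideanSpace ℝ (Fin n))).prod
            (ContinuousLinearMap.id ℝ (EuclideanSpace ℝ (Fin n)))))) y := by
  have hne : ((⟪y, y⟫ : ℝ)) ≠ 0 := inner_self_ne_zero.mpr hy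
  exact HasDerivAt.comp_hasFDerivAt
    (f := fun z : EuclideanSpace ℝ (Fin n) => (⟪z, z⟫ : ℝ)) y
    (hasDerivAt_inv hne) (hasFDerivAt_q y)

lemma hasFDerivAt_inversion (y : EuclideanSpace ℝ (Fin n)) (hy : y ≠ 0) :
    HasFDerivAt (fun z : EuclideanSpace ℝ (Fin n) => (‖z‖ ^ 2)⁻¹ • z) (Dinv n y) y := by
  have hne : ((⟪y, y⟫ : ℝ)) ≠ 0 := inner_self_ne_zero.mpr hy
  have h1 := (hasFDerivAt_c y hy).smul (hasFDerivAt_id y)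
  have heq : (fun z : EuclideanSpace ℝ (Fin n) => (‖z‖ ^ 2)⁻¹ • z)
      = fun z : EuclideanSpace ℝ (Fin n) => ((⟪z, z⟫ : ℝ))⁻¹ • z := by
    funext z
    rw [real_inner_self_eq_norm_sq]
  rw [heq]
  refine h1.congr_fderiv ?_
  refine ContinuousLinearMap.ext fun u => ?_
  simp only [Dinv, ContinuousLinearMap.add_apply, ContinuousLinearMap.smul_apply,
    ContinuousLinearMap.smulRight_apply, ContinuousLinearMap.comp_apply,
    ContinuousLinearMap.prod_apply, ContinuousLinearMap.id_apply, ContinuousLinearMap.coe_id',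
    id_eq, fderivInnerCLM_apply, sR_apply, innerE_apply, real_inner_comm u y]
  match_scalars
  · field_simp
  · field_simp
    ring_nf
    field_simp

end Aux

set_option maxHeartbeats 1000000 in
/-- The tensor `𝔏(f) = f*Γ − Γ` of the inversion `f(x) = x/‖x‖²` has the conformal
pure-trace form: `D²f(x)(u,v) = Df(x)( ω(u)·v + ω(v)·u − ⟨u,v⟩·ω♯ )`, where
`ω(w) = −2⟨x,w⟩/‖x‖²` and `ω♯ = −2x/‖x‖²`; hence the conformally invariant
Schwarzian cocycle vanishes on inversions. -/
theorem inversion_hessian (n : ℕ) (hn : 1 ≤ n)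
    (f : EuclideanSpace ℝ (Fin n) → EuclideanSpace ℝ (Fin n))
    (hf : ∀ x, f x = (‖x‖ ^ 2)⁻¹ • x) :
    ∀ (x : EuclideanSpace ℝ (Fin n)), x ≠ 0 →
      ∀ u v : EuclideanSpace ℝ (Fin n),
        fderiv ℝ (fderiv ℝ f) x u v
          = fderiv ℝ f x
              ((-2 * ⟪x, u⟫ / ‖x‖ ^ 2) • v + (-2 * ⟪x, v⟫ / ‖x‖ ^ 2) • u
                - ⟪u, v⟫ • ((-2 / ‖x‖ ^ 2) • x)) := by
  intro x hx u v
  have hffun : f = fun z => (‖z‖ ^ 2)⁻¹ • z := funext hf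
  have hne : ((⟪x, x⟫ : ℝ)) ≠ 0 := inner_self_ne_zero.mpr hx
  -- derivative of `y ↦ smulRightL (innerSL y) y` (the bilinear part of `Dinv`)
  have hc := hasFDerivAt_c x hx
  have hG : HasFDerivAt
      (fun y : EuclideanSpace ℝ (Fin n) => sR n (innerE n y) y)
      (((sR n).isBoundedBilinearMap.deriv (innerE n x, x)).comp
        ((innerE n).prod
          (ContinuousLinearMap.id ℝ (EuclideanSpace ℝ (Fin n))))) x := by
    exact HasFDerivAt.comp
      (f := fun y : EuclideanSpace ℝ (Fin n) => (innerE n y, y)) x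
      ((sR n).isBoundedBilinearMap.hasFDerivAt (innerE n x, x))
      (((innerE n).hasFDerivAt).prodMk (hasFDerivAt_id x))
  have hd := ((hc.mul hc).const_mul (2 : ℝ)).neg
  have hD2 := (hc.smul (hasFDerivAt_const
    (ContinuousLinearMap.id ℝ (EuclideanSpace ℝ (Fin n))) x)).add (hd.smul hG)
  have hD2' : HasFDerivAt (Dinv n) _ x := hD2
  -- identify the first derivative of `f` near `x`
  have h1 : fderiv ℝ f =ᶠ[nhds x] Dinv n := by
    filter_upwards [isOpen_compl_singleton.mem_nhds
      (by simpa using hx : x ∈ ({0}ᶜ : Set (EuclideanSpace ℝ (Fin n))))] with y hy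
    rw [hffun]
    exact (hasFDerivAt_inversion y hy).fderiv
  have h2 : fderiv ℝ (fderiv ℝ f) x = fderiv ℝ (Dinv n) x := h1.fderiv_eq
  have h3 : fderiv ℝ f x = Dinv n x := by
    rw [hffun]; exact (hasFDerivAt_inversion x hx).fderiv
  rw [h2, hD2'.fderiv, h3]
  have hq : ((⟪x, x⟫ : ℝ)) = ‖x‖ ^ 2 := real_inner_self_eq_norm_sq x
  have ht : (‖x‖ : ℝ) ^ 2 ≠ 0 := by rw [← hq]; exact hne
  simp only [Dinv, ContinuousLinearMap.add_apply, ContinuousLinearMap.smul_apply,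
    ContinuousLinearMap.comp_apply, ContinuousLinearMap.prod_apply,
    ContinuousLinearMap.coe_id', id_eq, ContinuousLinearMap.smulRight_apply,
    ContinuousLinearMap.zero_apply, IsBoundedBilinearMap.deriv_apply,
    sR_apply, innerE_apply, fderivInnerCLM_apply,
    ContinuousLinearMap.id_apply, ContinuousLinearMap.neg_apply, smul_zero, zero_add,
    map_add, map_sub, map_smul, map_neg, inner_add_right, inner_sub_right, inner_smul_right,
    inner_neg_right, real_inner_comm u x, real_inner_comm v x, hq, smul_add, smul_sub,
    smul_smul, smul_neg, neg_smul, Pi.neg_apply, Pi.mul_apply]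
  match_scalars <;>
    simp only [innerSL_apply_apply, PiLp.inner_apply, RCLike.inner_apply, conj_trivial] <;>
    field_simp <;> ring_nf <;> field_simp [norm_ne_zero_iff.mpr hx]
end

section
/- Let Ω ⊆ ℝⁿ be open and let f : Ω → ℝⁿ be a C³ map with Df(x) invertible for every x ∈ Ω. Define M(x)(u,v) = Df(x)⁻¹( D²f(x)(u,v) ) and τ(x)(v) = tr( u ↦ M(x)(u,v) ). Then for every x ∈ Ω and all u, v ∈ ℝⁿ: tr( w ↦ (D_x M(w))(u,v) ) = (D_x τ(·)(v))(u) + tr( A_u ∘ A_v ) − τ(x)( M(x)(u,v) ), where A_u : ℝⁿ → ℝⁿ is A_u(w) = M(x)(w,u), D_x M(w) denotes the derivative at x in direction w of the map x ↦ M(x), and D_x τ(·)(v) the derivative at x of x ↦ τ(x)(v). In coordinates this reads ∂_i 𝔏(f)^i_{jk} = ∂_j 𝔏(f)_k + 𝔏(f)^m_{sj} 𝔏(f)^s_{km} − 𝔏(f)_m 𝔏(f)^m_{jk}, i.e. the transformation law f⁻¹*R − R of the Ricci tensor under pullback, specialized to the flat connection where both Ricci tensors vanish. -/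
open ContinuousLinearMap

set_option maxHeartbeats 2000000

private theorem aux_hasFDerivAt_compL_comp {𝕜 X X' E F G : Type*} [NontriviallyNormedField 𝕜]
    [NormedAddCommGroup X] [NormedSpace 𝕜 X] [NormedAddCommGroup X'] [NormedSpace 𝕜 X']
    [NormedAddCommGroup E] [NormedSpace 𝕜 E] [NormedAddCommGroup F] [NormedSpace 𝕜 F]
    [NormedAddCommGroup G] [NormedSpace 𝕜 G]
    {i : X → (F →L[𝕜] G)} {i' : X →L[𝕜] (F →L[𝕜] G)}
    {d : X → (X' →L[𝕜] (E →L[𝕜] F))} {d' : X →L[𝕜] (X' →L[𝕜] (E →L[𝕜] F))} {x : X}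
    (hi : HasFDerivAt i i' x) (hd : HasFDerivAt d d' x) :
    HasFDerivAt (fun y => ((compL 𝕜 E F G) (i y)).comp (d y))
      ((compL 𝕜 X' (E →L[𝕜] F) (E →L[𝕜] G) ((compL 𝕜 E F G) (i x))).comp d'
        + ((compL 𝕜 X' (E →L[𝕜] F) (E →L[𝕜] G)).flip (d x)).comp
            ((compL 𝕜 E F G).comp i')) x := by
  have h0 : HasFDerivAt (compL 𝕜 E F G) (compL 𝕜 E F G) (i x) :=
    ContinuousLinearMap.hasFDerivAt _
  have h1 : HasFDerivAt (fun y => (compL 𝕜 E F G) (i y)) ((compL 𝕜 E F G).comp i') x :=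
    HasFDerivAt.comp (g := ⇑(compL 𝕜 E F G)) x h0 hi
  exact h1.clm_comp hd

/-- The flat-connection form of the Ricci transformation law
`∂_i 𝔏(f)^i_{jk} = ∂_j 𝔏(f)_k + 𝔏(f)^m_{sj} 𝔏(f)^s_{km} − 𝔏(f)_m 𝔏(f)^m_{jk}`:
for the tensor `M(x)(u,v) = Df(x)⁻¹(D²f(x)(u,v))` and its trace
`τ(x)(v) = tr(u ↦ M(x)(u,v))`, one has
`tr(w ↦ (D_x M(w))(u,v)) = (D_x τ(·)(v))(u) + tr(A_u ∘ A_v) − τ(x)(M(x)(u,v))`,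
where `A_u(w) = M(x)(w,u)`. -/
theorem ricci_transformation_flat (n : ℕ) (Ω : Set (Fin n → ℝ)) (hΩ : IsOpen Ω)
    (f : (Fin n → ℝ) → (Fin n → ℝ)) (hf : ContDiffOn ℝ 3 f Ω)
    (hinv : ∀ x ∈ Ω, (fderiv ℝ f x).IsInvertible)
    (M : (Fin n → ℝ) → ((Fin n → ℝ) →L[ℝ] (Fin n → ℝ) →L[ℝ] (Fin n → ℝ)))
    (hM : ∀ y, M y = ((ContinuousLinearMap.compL ℝ (Fin n → ℝ) (Fin n → ℝ) (Fin n → ℝ))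
      ((fderiv ℝ f y).inverse)).comp (fderiv ℝ (fderiv ℝ f) y))
    (τ : (Fin n → ℝ) → (Fin n → ℝ) → ℝ)
    (hτ : ∀ y v, τ y v = LinearMap.trace ℝ (Fin n → ℝ)
      (((ContinuousLinearMap.apply ℝ (Fin n → ℝ) v).comp (M y)).toLinearMap)) :
    ∀ x ∈ Ω, ∀ u v : Fin n → ℝ,
      LinearMap.trace ℝ (Fin n → ℝ)
          (((ContinuousLinearMap.apply ℝ (Fin n → ℝ) v).comp
            (((ContinuousLinearMap.apply ℝ ((Fin n → ℝ) →L[ℝ] (Fin n → ℝ)) u).comp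
              (fderiv ℝ M x)))).toLinearMap)
        = fderiv ℝ (fun y => τ y v) x u
          + LinearMap.trace ℝ (Fin n → ℝ)
              ((((ContinuousLinearMap.apply ℝ (Fin n → ℝ) u).comp (M x)).comp
                ((ContinuousLinearMap.apply ℝ (Fin n → ℝ) v).comp (M x))).toLinearMap)
          - τ x (M x u v) := by
  intro x hx u v
  obtain ⟨e, he⟩ := hinv x hx
  have hinvx : (fderiv ℝ f x).inverse = (e.symm : (Fin n → ℝ) →L[ℝ] (Fin n → ℝ)) := by
    rw [← he, inverse_equiv]
  have hfx : ContDiffAt ℝ 3 f x := hf.contDiffAt (hΩ.mem_nhds hx)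
  have hg : ContDiffAt ℝ 2 (fderiv ℝ f) x := hfx.fderiv_right (m := 2) (by norm_num)
  have hg' : ContDiffAt ℝ 1 (fderiv ℝ (fderiv ℝ f)) x := hg.fderiv_right (m := 1) (by norm_num)
  have hdg : HasFDerivAt (fderiv ℝ f) (fderiv ℝ (fderiv ℝ f) x) x :=
    (hg.differentiableAt (by norm_num)).hasFDerivAt
  have hdg' : HasFDerivAt (fderiv ℝ (fderiv ℝ f)) (fderiv ℝ (fderiv ℝ (fderiv ℝ f)) x) x :=
    (hg'.differentiableAt (by norm_num)).hasFDerivAt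
  -- symmetry of second derivatives
  have hsymf : ∀ a b : Fin n → ℝ,
      fderiv ℝ (fderiv ℝ f) x a b = fderiv ℝ (fderiv ℝ f) x b a :=
    hfx.isSymmSndFDerivAt (by norm_num)
  have hsymg : ∀ a b : Fin n → ℝ,
      fderiv ℝ (fderiv ℝ (fderiv ℝ f)) x a b = fderiv ℝ (fderiv ℝ (fderiv ℝ f)) x b a :=
    hg.isSymmSndFDerivAt (by norm_num)
  -- derivative of the inverse of the differential
  have hi : HasFDerivAt (fun y => (fderiv ℝ f y).inverse)
      ((-(mulLeftRight ℝ ((Fin n → ℝ) →L[ℝ] (Fin n → ℝ)) (e.symm : (Fin n → ℝ) →L[ℝ] (Fin n → ℝ))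
          (e.symm : (Fin n → ℝ) →L[ℝ] (Fin n → ℝ)))).comp (fderiv ℝ (fderiv ℝ f) x)) x := by
    have h1 : HasFDerivAt
        (Ring.inverse : ((Fin n → ℝ) →L[ℝ] (Fin n → ℝ)) → ((Fin n → ℝ) →L[ℝ] (Fin n → ℝ)))
        (-(mulLeftRight ℝ ((Fin n → ℝ) →L[ℝ] (Fin n → ℝ))
          (e.symm : (Fin n → ℝ) →L[ℝ] (Fin n → ℝ))
          (e.symm : (Fin n → ℝ) →L[ℝ] (Fin n → ℝ)))) (fderiv ℝ f x) := by
      have h := hasFDerivAt_ringInverse (𝕜 := ℝ) e.toUnit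
      rw [show ((e.toUnit : ((Fin n → ℝ) →L[ℝ] (Fin n → ℝ))ˣ) : (Fin n → ℝ) →L[ℝ] (Fin n → ℝ))
        = (e : (Fin n → ℝ) →L[ℝ] (Fin n → ℝ)) from rfl, he] at h
      exact h
    have h2 := h1.comp x hdg
    simp only [ringInverse_eq_inverse] at h2
    exact h2
  -- derivative of M
  have hMhas := aux_hasFDerivAt_compL_comp hi hdg'
  rw [show (fun y => ((compL ℝ (Fin n → ℝ) (Fin n → ℝ) (Fin n → ℝ)) ((fderiv ℝ f y).inverse)).comp
      (fderiv ℝ (fderiv ℝ f) y)) = M from (funext fun y => (hM y).symm)] at hMhas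
  have hfderivM := hMhas.fderiv
  -- pointwise formula for the derivative of M
  have hΨ : ∀ w a b : Fin n → ℝ, fderiv ℝ M x w a b
      = e.symm (fderiv ℝ (fderiv ℝ (fderiv ℝ f)) x w a b) - M x w (M x a b) := by
    intro w a b
    rw [hfderivM]
    simp [hM, hinvx, ContinuousLinearMap.mul_apply, sub_eq_add_neg]
    rfl
  have hMab : ∀ a b : Fin n → ℝ, M x a b = e.symm (fderiv ℝ (fderiv ℝ f) x a b) := by
    intro a b
    simp [hM, hinvx]
  have hMsym : ∀ a b : Fin n → ℝ, M x a b = M x b a := by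
    intro a b; rw [hMab, hMab, hsymf]
  -- the linear functional `N ↦ tr (apply v ∘ N)`
  let Tv' : (((Fin n → ℝ) →L[ℝ] (Fin n → ℝ) →L[ℝ] (Fin n → ℝ)) →L[ℝ] ℝ) :=
    LinearMap.toContinuousLinearMap
    { toFun := fun N => LinearMap.trace ℝ (Fin n → ℝ)
        (((ContinuousLinearMap.apply ℝ (Fin n → ℝ) v).comp N).toLinearMap)
      map_add' := by
        intro N N'
        have h : ((ContinuousLinearMap.apply ℝ (Fin n → ℝ) v).comp (N + N')).toLinearMap
            = ((ContinuousLinearMap.apply ℝ (Fin n → ℝ) v).comp N).toLinearMap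
              + ((ContinuousLinearMap.apply ℝ (Fin n → ℝ) v).comp N').toLinearMap := by
          apply LinearMap.ext
          intro w
          simp
        simp only [h, map_add]
      map_smul' := by
        intro c N
        have h : ((ContinuousLinearMap.apply ℝ (Fin n → ℝ) v).comp (c • N)).toLinearMap
            = c • ((ContinuousLinearMap.apply ℝ (Fin n → ℝ) v).comp N).toLinearMap := by
          apply LinearMap.ext
          intro w
          simp
        simp only [h, map_smul, RingHom.id_apply] }
  have hτv : (fun y => τ y v) = fun y => Tv' (M y) := by
    funext y
    simp only [Tv', LinearMap.coe_toContinuousLinearMap']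
    exact hτ y v
  have hdτcomp : HasFDerivAt (fun y => Tv' (M y)) (Tv'.comp (fderiv ℝ M x)) x := by
    rw [hfderivM]
    exact Tv'.hasFDerivAt.comp x hMhas
  have hdτ : fderiv ℝ (fun y => τ y v) x u = LinearMap.trace ℝ (Fin n → ℝ)
      (((ContinuousLinearMap.apply ℝ (Fin n → ℝ) v).comp (fderiv ℝ M x u)).toLinearMap) := by
    rw [hτv, hdτcomp.fderiv]
    simp only [coe_comp', Function.comp_apply, Tv', LinearMap.coe_toContinuousLinearMap',
      LinearMap.coe_mk, AddHom.coe_mk]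
  rw [hdτ]
  have key : (((ContinuousLinearMap.apply ℝ (Fin n → ℝ) v).comp
        (((ContinuousLinearMap.apply ℝ ((Fin n → ℝ) →L[ℝ] (Fin n → ℝ)) u).comp
          (fderiv ℝ M x)))).toLinearMap)
      = (((ContinuousLinearMap.apply ℝ (Fin n → ℝ) v).comp (fderiv ℝ M x u)).toLinearMap)
        + ((((ContinuousLinearMap.apply ℝ (Fin n → ℝ) u).comp (M x)).comp
            ((ContinuousLinearMap.apply ℝ (Fin n → ℝ) v).comp (M x))).toLinearMap)
        - (((ContinuousLinearMap.apply ℝ (Fin n → ℝ) (M x u v)).comp (M x)).toLinearMap) := by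
    apply LinearMap.ext
    intro w
    simp only [LinearMap.sub_apply, LinearMap.add_apply, ContinuousLinearMap.coe_coe,
      coe_comp', Function.comp_apply, apply_apply]
    rw [hΨ w u v, hΨ u w v, hsymg u w, hMsym (M x w v) u]
    abel
  rw [key, map_sub, map_add, hτ x (M x u v)]
end
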